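/- Expected geometric hypervolume guarantee (Proposition 4.1, weak form). Let B ≥ 2, let e₁, …, e_B ∈ ℝᵈ be points on the unit sphere (‖eᵢ‖ = 1), and let t, u ∈ ℝᵈ be orthonormal vectors. For δ = ((a₁, …, a_B), (b₁, …, b_B)) ∈ ℝ^B × ℝ^B define perturbed points ẽᵢ(δ) = eᵢ + aᵢ t + bᵢ u, edge vectors vᵢ(δ) = ẽᵢ(δ) − ẽ₁(δ) for i = 2, …, B, the Gram matrix G̃(δ) with entries G̃(δ)ᵢⱼ = ⟨vᵢ(δ), vⱼ(δ)⟩, and the hypervolume V(δ) = √(det G̃(δ)) / (B−1)!. Let δ be distributed as the product of i.i.d. uniform distributions on [−r₁, r₁] for the aᵢ and on [−r₂, r₂] for the bᵢ, all independent. Then E[ V(δ) ] ≥ V(0): the expected hypervolume of the perturbed point set is at least the hypervolume of the original point set. -/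

import Mathlib

open MeasureTheory

/-- The uniform probability distribution on `[-r, r]`; for `r = 0` this is the Dirac mass
at `0`. -/
noncomputable def unifIcc (r : ℝ) : Measure ℝ :=
  if r = 0 then Measure.dirac 0
  else ((2 * r).toNNReal)⁻¹ • volume.restrict (Set.Icc (-r) r)

instance (r : ℝ) : SigmaFinite (unifIcc r) := by
  unfold unifIcc; split <;> infer_instance

/-- Product measure: `B` i.i.d. uniform shifts `aᵢ` on `[-r₁, r₁]` and `B` i.i.d. uniform
shifts `bᵢ` on `[-r₂, r₂]`, all `2B` coordinates independent. -/
noncomputable def gassMeasure (B : ℕ) (r₁ r₂ : ℝ) :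
    Measure ((Fin B → ℝ) × (Fin B → ℝ)) :=
  (Measure.pi fun _ => unifIcc r₁).prod (Measure.pi fun _ => unifIcc r₂)

/-- Perturbed points `ẽᵢ(δ) = eᵢ + aᵢ • t + bᵢ • u` where `δ = (a, b)`. -/
noncomputable def gassPert {d B : ℕ} (e : Fin B → EuclideanSpace ℝ (Fin d))
    (t u : EuclideanSpace ℝ (Fin d)) (δ : (Fin B → ℝ) × (Fin B → ℝ)) (i : Fin B) :
    EuclideanSpace ℝ (Fin d) :=
  e i + δ.1 i • t + δ.2 i • u

/-- Edge vectors `vᵢ(δ) = ẽᵢ₊₁(δ) - ẽ₁(δ)`, for `i = 2, …, B` (indexed by `Fin (B - 1)`). -/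
noncomputable def gassEdge {d B : ℕ} (e : Fin B → EuclideanSpace ℝ (Fin d))
    (t u : EuclideanSpace ℝ (Fin d)) (δ : (Fin B → ℝ) × (Fin B → ℝ))
    (j : Fin (B - 1)) : EuclideanSpace ℝ (Fin d) :=
  gassPert e t u δ ⟨j.1 + 1, by have := j.2; omega⟩ -
    gassPert e t u δ ⟨0, by have := j.2; omega⟩

/-- The `(B-1) × (B-1)` Gram matrix of the edge vectors, `G̃(δ)ᵢⱼ = ⟨vᵢ(δ), vⱼ(δ)⟩`. -/
noncomputable def gassGram {d B : ℕ} (e : Fin B → EuclideanSpace ℝ (Fin d))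
    (t u : EuclideanSpace ℝ (Fin d)) (δ : (Fin B → ℝ) × (Fin B → ℝ)) :
    Matrix (Fin (B - 1)) (Fin (B - 1)) ℝ :=
  Matrix.of fun i j => inner ℝ (gassEdge e t u δ i) (gassEdge e t u δ j)

/-- The `(B-1)`-dimensional hypervolume of the simplex spanned by the (perturbed) batch:
`V(δ) = √(det G̃(δ)) / (B-1)!`. -/
noncomputable def gassVolume {d B : ℕ} (e : Fin B → EuclideanSpace ℝ (Fin d))
    (t u : EuclideanSpace ℝ (Fin d)) (δ : (Fin B → ℝ) × (Fin B → ℝ)) : ℝ :=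
  Real.sqrt (gassGram e t u δ).det / (Nat.factorial (B - 1) : ℝ)

open scoped ENNReal NNReal

lemma unifIcc_prob {r : ℝ} (hr : 0 ≤ r) : IsProbabilityMeasure (unifIcc r) := by
  unfold unifIcc
  split
  · infer_instance
  · rename_i h
    have hr' : 0 < r := lt_of_le_of_ne hr (Ne.symm h)
    constructor
    rw [Measure.smul_apply, Measure.restrict_apply MeasurableSet.univ, Set.univ_inter,
      Real.volume_Icc]
    have h2 : (0:ℝ) < 2 * r := by linarith
    have : ENNReal.ofReal (r - -r) = ((2*r).toNNReal : ℝ≥0∞) := by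
      rw [ENNReal.ofReal]; congr 1; ring_nf
    rw [this]
    have hne : (2 * r).toNNReal ≠ 0 := by
      simp [Real.toNNReal_eq_zero]; linarith
    rw [← ENNReal.coe_smul, smul_eq_mul, inv_mul_cancel₀ hne, ENNReal.coe_one]

lemma unifIcc_ae {r : ℝ} (hr : 0 ≤ r) : ∀ᵐ x ∂(unifIcc r), x ∈ Set.Icc (-r) r := by
  unfold unifIcc
  split
  · rename_i h; subst h
    rw [ae_dirac_iff (by measurability)]
    simp
  · rw [ae_iff]
    rw [Measure.smul_apply, Measure.restrict_apply₀]
    · have : {x | ¬ x ∈ Set.Icc (-r) r} ∩ Set.Icc (-r) r = ∅ := by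
        ext x; simp (config := {contextual := true}) [Set.mem_inter_iff]
      rw [this]; simp
    · exact (measurableSet_Icc.compl).nullMeasurableSet

lemma unifIcc_integral {r : ℝ} (hr : 0 ≤ r) : ∫ x, x ∂(unifIcc r) = 0 := by
  unfold unifIcc
  split
  · simp
  · rename_i h
    have hr' : 0 < r := lt_of_le_of_ne hr (Ne.symm h)
    rw [integral_smul_nnreal_measure]
    have : ∫ x in Set.Icc (-r) r, x = 0 := by
      rw [MeasureTheory.integral_Icc_eq_integral_Ioc,
        ← intervalIntegral.integral_of_le (by linarith : -r ≤ r), integral_id]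
      ring
    rw [this, smul_zero]

section PiLemmas

variable {B : ℕ} {r : ℝ}

lemma unifIcc_Icc (hr : 0 ≤ r) : unifIcc r (Set.Icc (-r) r) = 1 := by
  have hp := unifIcc_prob hr
  have hc : unifIcc r (Set.Icc (-r) r)ᶜ = 0 := by
    have h := unifIcc_ae hr
    rw [ae_iff] at h
    exact h
  exact (prob_compl_eq_zero_iff measurableSet_Icc).1 hc

lemma pi_unif_prob (hr : 0 ≤ r) :
    IsProbabilityMeasure (Measure.pi fun _ : Fin B => unifIcc r) := by
  have := unifIcc_prob hr
  infer_instance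

lemma pi_unif_ae (hr : 0 ≤ r) :
    ∀ᵐ a ∂(Measure.pi fun _ : Fin B => unifIcc r),
      a ∈ Set.pi Set.univ (fun _ => Set.Icc (-r) r) := by
  have hp := pi_unif_prob (B := B) hr
  have h1 : (Measure.pi fun _ : Fin B => unifIcc r)
      (Set.pi Set.univ (fun _ => Set.Icc (-r) r)) = 1 := by
    rw [Measure.pi_pi]
    simp [unifIcc_Icc hr]
  have hm : MeasurableSet (Set.pi Set.univ (fun _ : Fin B => Set.Icc (-r) r)) :=
    MeasurableSet.univ_pi fun _ => measurableSet_Icc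
  exact ae_iff.2 ((prob_compl_eq_zero_iff hm).2 h1)

lemma pi_unif_integrable (hr : 0 ≤ r) {E : Type*} [NormedAddCommGroup E]
    {f : (Fin B → ℝ) → E} (hf : Continuous f) :
    Integrable f (Measure.pi fun _ : Fin B => unifIcc r) := by
  have hp := pi_unif_prob (B := B) hr
  have hK : IsCompact (Set.pi Set.univ (fun _ : Fin B => Set.Icc (-r) r)) :=
    isCompact_univ_pi fun _ => isCompact_Icc
  rw [← Measure.restrict_eq_self_of_ae_mem (pi_unif_ae (B := B) hr)]
  exact ContinuousOn.integrableOn_compact hK hf.continuousOn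

lemma pi_unif_integral_eval (hr : 0 ≤ r) (i : Fin B) :
    ∫ a, a i ∂(Measure.pi fun _ : Fin B => unifIcc r) = 0 := by
  have hp := unifIcc_prob hr
  letI : MeasureSpace ℝ := ⟨unifIcc r⟩
  have key := MeasureTheory.integral_fintype_prod_eq_prod (𝕜 := ℝ) (ι := Fin B)
    (fun j (x : ℝ) => if j = i then x else 1) (μ := fun _ => unifIcc r)
  have hL : (fun a : Fin B → ℝ => ∏ j, if j = i then a j else 1) = fun a => a i := by
    funext a
    rw [Finset.prod_ite_eq' Finset.univ i (fun j => a j)]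
    simp
  have hR : ∏ j, (∫ x : ℝ, if j = i then x else 1) = 0 := by
    rw [Finset.prod_eq_zero (Finset.mem_univ i)]
    have : ∫ x : ℝ, (if (i:Fin B) = i then x else 1) = ∫ x : ℝ, x ∂(unifIcc r) := by
      simp only [if_pos rfl]; rfl
    rw [this, unifIcc_integral hr]
  simp only [hL] at key
  exact key.trans hR

end PiLemmas

section GassMeasureLemmas

variable {B : ℕ} {r₁ r₂ : ℝ}

lemma gass_prob (hr₁ : 0 ≤ r₁) (hr₂ : 0 ≤ r₂) :
    IsProbabilityMeasure (gassMeasure B r₁ r₂) := by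
  have := pi_unif_prob (B := B) hr₁
  have := pi_unif_prob (B := B) hr₂
  unfold gassMeasure
  infer_instance

lemma gass_integrable (hr₁ : 0 ≤ r₁) (hr₂ : 0 ≤ r₂) {E : Type*} [NormedAddCommGroup E]
    {f : (Fin B → ℝ) × (Fin B → ℝ) → E} (hf : Continuous f) :
    Integrable f (gassMeasure B r₁ r₂) := by
  have h1 := pi_unif_prob (B := B) hr₁
  have h2 := pi_unif_prob (B := B) hr₂
  have hp := gass_prob (B := B) hr₁ hr₂
  set K := (Set.pi Set.univ fun _ : Fin B => Set.Icc (-r₁) r₁) ×ˢ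
      (Set.pi Set.univ fun _ : Fin B => Set.Icc (-r₂) r₂) with hKdef
  have hK : IsCompact K :=
    (isCompact_univ_pi fun _ => isCompact_Icc).prod
      (isCompact_univ_pi fun _ => isCompact_Icc)
  have hm : MeasurableSet K :=
    (MeasurableSet.univ_pi fun _ => measurableSet_Icc).prod
      (MeasurableSet.univ_pi fun _ => measurableSet_Icc)
  have h1' : gassMeasure B r₁ r₂ K = 1 := by
    rw [hKdef]
    unfold gassMeasure
    rw [Measure.prod_prod, Measure.pi_pi, Measure.pi_pi]
    simp [unifIcc_Icc hr₁, unifIcc_Icc hr₂]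
  have hae : ∀ᵐ δ ∂(gassMeasure B r₁ r₂), δ ∈ K :=
    ae_iff.2 ((prob_compl_eq_zero_iff hm).2 h1')
  rw [← Measure.restrict_eq_self_of_ae_mem hae]
  exact ContinuousOn.integrableOn_compact hK hf.continuousOn

lemma gass_integral_mul (hr₁ : 0 ≤ r₁) (hr₂ : 0 ≤ r₂) (φ ψ : (Fin B → ℝ) → ℝ)
    (hφ : ∫ a, φ a ∂(Measure.pi fun _ : Fin B => unifIcc r₁) = 0) :
    ∫ δ, φ δ.1 * ψ δ.2 ∂(gassMeasure B r₁ r₂) = 0 := by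
  unfold gassMeasure
  rw [integral_prod_mul, hφ, zero_mul]

lemma gass_integral_fst (hr₁ : 0 ≤ r₁) (hr₂ : 0 ≤ r₂) (i : Fin B) :
    ∫ δ, δ.1 i ∂(gassMeasure B r₁ r₂) = 0 := by
  have h := gass_integral_mul hr₁ hr₂ (fun a => a i) (fun _ => 1)
    (pi_unif_integral_eval hr₁ i)
  simpa using h

lemma gass_integral_mul' (hr₁ : 0 ≤ r₁) (hr₂ : 0 ≤ r₂) (φ ψ : (Fin B → ℝ) → ℝ)
    (hψ : ∫ b, ψ b ∂(Measure.pi fun _ : Fin B => unifIcc r₂) = 0) :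
    ∫ δ, φ δ.1 * ψ δ.2 ∂(gassMeasure B r₁ r₂) = 0 := by
  unfold gassMeasure
  rw [integral_prod_mul, hψ, mul_zero]

lemma gass_integral_snd (hr₁ : 0 ≤ r₁) (hr₂ : 0 ≤ r₂) (i : Fin B) :
    ∫ δ, δ.2 i ∂(gassMeasure B r₁ r₂) = 0 := by
  have h := gass_integral_mul' hr₁ hr₂ (fun _ => 1) (fun b => b i)
    (pi_unif_integral_eval hr₂ i)
  simpa using h

end GassMeasureLemmas

open Matrix
section CauchyBinet

variable {k d : ℕ}

private lemma det_ATA (A : Matrix (Fin d) (Fin k) ℝ) :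
    (Aᵀ * A).det = ∑ g : Fin k → Fin d,
      (∏ i, A (g i) i) * (Matrix.of fun i j => A (g i) j).det := by
  rw [Matrix.det_apply]
  have h1 : ∀ σ : Equiv.Perm (Fin k), (∏ i, (Aᵀ * A) (σ i) i)
      = ∑ g : Fin k → Fin d, ∏ i, A (g i) (σ i) * A (g i) i := by
    intro σ
    simp only [Matrix.mul_apply, Matrix.transpose_apply]
    rw [Finset.prod_univ_sum]
    rw [Fintype.piFinset_univ]
  calc ∑ σ : Equiv.Perm (Fin k), Equiv.Perm.sign σ • ∏ i, (Aᵀ * A) (σ i) i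
      = ∑ σ : Equiv.Perm (Fin k), ∑ g : Fin k → Fin d,
          Equiv.Perm.sign σ • ∏ i, A (g i) (σ i) * A (g i) i := by
        refine Finset.sum_congr rfl fun σ _ => ?_
        rw [h1 σ, Finset.smul_sum]
    _ = ∑ g : Fin k → Fin d, ∑ σ : Equiv.Perm (Fin k),
          Equiv.Perm.sign σ • ∏ i, A (g i) (σ i) * A (g i) i := Finset.sum_comm
    _ = ∑ g : Fin k → Fin d,
          (∏ i, A (g i) i) * (Matrix.of fun i j => A (g i) j).det := by
        refine Finset.sum_congr rfl fun g _ => ?_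
        have : (Matrix.of fun i j => A (g i) j).det
            = ∑ σ : Equiv.Perm (Fin k), Equiv.Perm.sign σ • ∏ i, A (g i) (σ i) := by
          rw [← Matrix.det_transpose, Matrix.det_apply]
          rfl
        rw [this, Finset.mul_sum]
        refine Finset.sum_congr rfl fun σ _ => ?_
        rw [Finset.prod_mul_distrib,
          mul_comm (∏ x, A (g x) (σ x)) (∏ x, A (g x) x), mul_smul_comm]

private lemma sum_det_sq (A : Matrix (Fin d) (Fin k) ℝ) :
    ∑ g : Fin k → Fin d, ((Matrix.of fun i j => A (g i) j).det) ^ 2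
      = (Nat.factorial k : ℝ) * (Aᵀ * A).det := by
  have hdet : ∀ g : Fin k → Fin d, (Matrix.of fun i j => A (g i) j).det
      = ∑ σ : Equiv.Perm (Fin k), Equiv.Perm.sign σ • ∏ i, A (g (σ i)) i := by
    intro g
    rw [Matrix.det_apply]
    rfl
  calc ∑ g : Fin k → Fin d, ((Matrix.of fun i j => A (g i) j).det) ^ 2
      = ∑ g : Fin k → Fin d, ∑ σ : Equiv.Perm (Fin k),
          (Equiv.Perm.sign σ • ∏ i, A (g (σ i)) i) * (Matrix.of fun i j => A (g i) j).det := by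
        refine Finset.sum_congr rfl fun g _ => ?_
        have h := congrArg (fun x => x * (Matrix.of fun i j => A (g i) j).det) (hdet g)
        simp only [pow_two]
        rw [← Finset.sum_mul]
        simpa using h
    _ = ∑ σ : Equiv.Perm (Fin k), ∑ g : Fin k → Fin d,
          (Equiv.Perm.sign σ • ∏ i, A (g (σ i)) i) * (Matrix.of fun i j => A (g i) j).det :=
        Finset.sum_comm
    _ = ∑ σ : Equiv.Perm (Fin k), ∑ g : Fin k → Fin d,
          (∏ i, A (g i) i) * (Matrix.of fun i j => A (g i) j).det := by
        refine Finset.sum_congr rfl fun σ _ => ?_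
        have := Equiv.sum_comp (Equiv.arrowCongr (σ : Equiv.Perm (Fin k)) (Equiv.refl (Fin d)))
          (fun g : Fin k → Fin d =>
            (Equiv.Perm.sign σ • ∏ i, A (g (σ i)) i) * (Matrix.of fun i j => A (g i) j).det)
        rw [← this]
        refine Finset.sum_congr rfl fun h _ => ?_
        have he : ∀ x, (Equiv.arrowCongr (σ : Equiv.Perm (Fin k)) (Equiv.refl (Fin d))) h x
            = h (σ.symm x) := fun x => rfl
        have h2 : (∏ i, A ((Equiv.arrowCongr (σ : Equiv.Perm (Fin k)) (Equiv.refl (Fin d))) h (σ i)) i)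
            = ∏ i, A (h i) i := by
          refine Finset.prod_congr rfl fun i _ => ?_
          rw [he]
          simp
        have h3 : (Matrix.of fun i j =>
              A ((Equiv.arrowCongr (σ : Equiv.Perm (Fin k)) (Equiv.refl (Fin d))) h i) j)
            = (Matrix.of fun i j => A (h i) j).submatrix σ.symm id := by
          ext i j
          simp [he, Matrix.submatrix_apply]
        rw [h2, h3, Matrix.det_permute]
        have hs : ((Equiv.Perm.sign σ.symm : ℤ) : ℝ) * ((Equiv.Perm.sign σ : ℤ) : ℝ) = 1 := by
          rw [← Int.cast_mul]
          rw [Equiv.Perm.sign_symm]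
          norm_num [Int.units_mul_self]
        rw [Units.smul_def, zsmul_eq_mul]
        linear_combination ((∏ i : Fin k, A (h i) i) * (Matrix.of fun i j => A (h i) j).det) * hs
    _ = ∑ σ : Equiv.Perm (Fin k), (Aᵀ * A).det := by
        refine Finset.sum_congr rfl fun σ _ => ?_
        rw [det_ATA]
    _ = (Nat.factorial k : ℝ) * (Aᵀ * A).det := by
        rw [Finset.sum_const, Finset.card_univ, Fintype.card_perm, Fintype.card_fin,
          nsmul_eq_mul]

end CauchyBinet

section Main

open Matrix

variable {d B : ℕ} (e : Fin B → EuclideanSpace ℝ (Fin d))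
  (t u : EuclideanSpace ℝ (Fin d))

private def embG {B : ℕ} (j : Fin (B - 1)) : Fin B := ⟨j.1 + 1, by have := j.2; omega⟩

private lemma gassEdge_apply (δ : (Fin B → ℝ) × (Fin B → ℝ)) (hB : 0 < B)
    (j : Fin (B - 1)) (x : Fin d) :
    gassEdge e t u δ j x
      = (e (embG j) x - e (⟨0, hB⟩ : Fin B) x)
        + (δ.1 (embG j) - δ.1 ⟨0, hB⟩) * t x
        + (δ.2 (embG j) - δ.2 ⟨0, hB⟩) * u x := by
  unfold gassEdge gassPert
  simp only [PiLp.sub_apply, PiLp.add_apply, PiLp.smul_apply, smul_eq_mul, embG]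
  ring

/-- The `d × (B-1)` matrix of edge vectors as columns. -/
private noncomputable def edgeMat (δ : (Fin B → ℝ) × (Fin B → ℝ)) :
    Matrix (Fin d) (Fin (B - 1)) ℝ :=
  Matrix.of fun r j => gassEdge e t u δ j r

private lemma gram_eq (δ : (Fin B → ℝ) × (Fin B → ℝ)) :
    gassGram e t u δ = (edgeMat e t u δ)ᵀ * edgeMat e t u δ := by
  ext i j
  simp only [gassGram, Matrix.of_apply, Matrix.mul_apply, Matrix.transpose_apply, edgeMat]
  rw [PiLp.inner_apply]
  simp [RCLike.inner_apply, conj_trivial, mul_comm]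

/-- `Tvec δ g` is the determinant of the row-selected `(B-1) × (B-1)` minor. -/
private noncomputable def Tvec (δ : (Fin B → ℝ) × (Fin B → ℝ)) :
    EuclideanSpace ℝ ((Fin (B - 1)) → Fin d) :=
  WithLp.toLp 2 fun g => (Matrix.of fun i j => gassEdge e t u δ j (g i)).det

private lemma volume_eq_norm (δ : (Fin B → ℝ) × (Fin B → ℝ)) :
    gassVolume e t u δ
      = ‖Tvec e t u δ‖ / (Real.sqrt (Nat.factorial (B - 1)) * (Nat.factorial (B - 1))) := by
  have hfac : (0:ℝ) < (Nat.factorial (B - 1) : ℝ) := by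
    exact_mod_cast Nat.factorial_pos (B - 1)
  have hCB : ∑ g : Fin (B - 1) → Fin d,
      ((Matrix.of fun i j => (edgeMat e t u δ) (g i) j).det) ^ 2
      = (Nat.factorial (B - 1) : ℝ) * ((edgeMat e t u δ)ᵀ * edgeMat e t u δ).det :=
    sum_det_sq (edgeMat e t u δ)
  have hnorm : ‖Tvec e t u δ‖
      = Real.sqrt (∑ g : Fin (B - 1) → Fin d, (Tvec e t u δ g) ^ 2) := by
    rw [EuclideanSpace.norm_eq]
    congr 1
    refine Finset.sum_congr rfl fun g _ => ?_
    rw [Real.norm_eq_abs, sq_abs]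
  have hsum : ∑ g : Fin (B - 1) → Fin d, (Tvec e t u δ g) ^ 2
      = (Nat.factorial (B - 1) : ℝ) * (gassGram e t u δ).det := by
    rw [gram_eq]
    exact hCB
  rw [gassVolume, hnorm, hsum, Real.sqrt_mul (le_of_lt hfac)]
  rw [mul_div_mul_left _ _ (by positivity : Real.sqrt ((Nat.factorial (B-1)):ℝ) ≠ 0)]

end Main

section Core

open Matrix

variable {d B : ℕ}

private lemma alt_two_smul {k : ℕ} (f : (Fin k → ℝ) [⋀^Fin k]→ₗ[ℝ] ℝ)
    (v : Fin k → (Fin k → ℝ)) {i₀ i₁ : Fin k} (hne : i₀ ≠ i₁) (x : Fin k → ℝ)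
    (c₀ c₁ : ℝ) (h₀ : v i₀ = c₀ • x) (h₁ : v i₁ = c₁ • x) : f v = 0 := by
  have hv : v = Function.update (Function.update v i₀ (c₀ • x)) i₁ (c₁ • x) := by
    funext i
    by_cases hi1 : i = i₁
    · subst hi1; rw [Function.update_self]; exact h₁
    · rw [Function.update_of_ne hi1]
      by_cases hi0 : i = i₀
      · subst hi0; rw [Function.update_self]; exact h₀
      · rw [Function.update_of_ne hi0]
  rw [hv, AlternatingMap.map_update_smul, Function.update_comm hne,
    AlternatingMap.map_update_smul]
  have hz : f (Function.update (Function.update v i₁ x) i₀ x) = 0 := by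
    refine f.map_eq_zero_of_eq _ ?_ hne
    rw [Function.update_self, Function.update_of_ne (Ne.symm hne), Function.update_self]
  rw [hz, smul_zero, smul_zero]

variable (e : Fin B → EuclideanSpace ℝ (Fin d)) (t u : EuclideanSpace ℝ (Fin d)) {r₁ r₂ : ℝ}

private lemma integral_Tg (hB : 0 < B) (hr₁ : 0 ≤ r₁) (hr₂ : 0 ≤ r₂)
    (g : Fin (B - 1) → Fin d) :
    ∫ δ, (Matrix.of fun i j => gassEdge e t u δ j (g i)).det ∂(gassMeasure B r₁ r₂)
      = (Matrix.of fun i j =>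
          gassEdge e t u (0 : (Fin B → ℝ) × (Fin B → ℝ)) j (g i)).det := by
  have hprob := gass_prob (B := B) hr₁ hr₂
  set z : Fin B := ⟨0, hB⟩ with hz
  set W : Fin (B - 1) → (Fin (B - 1) → ℝ) :=
    fun i j => e (embG j) (g i) - e z (g i) with hW
  set alf : (Fin B → ℝ) → (Fin (B - 1) → ℝ) := fun a j => a (embG j) - a z with half
  set V : ((Fin B → ℝ) × (Fin B → ℝ)) → Fin (B - 1) → Fin 3 → (Fin (B - 1) → ℝ) :=
    fun δ i => ![W i, t (g i) • alf δ.1, u (g i) • alf δ.2] with hV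
  set f : (Fin (B - 1) → ℝ) [⋀^Fin (B - 1)]→ₗ[ℝ] ℝ :=
    Matrix.detRowAlternating with hf
  set bvec : Fin (B - 1) → (Fin (B - 1) → ℝ) :=
    fun j j' => if j = j' then 1 else 0 with hbvec
  -- row decomposition
  have hrow : ∀ δ : (Fin B → ℝ) × (Fin B → ℝ),
      (fun i (j : Fin (B - 1)) => gassEdge e t u δ j (g i))
        = fun i => ∑ c : Fin 3, V δ i c := by
    intro δ
    funext i j
    rw [Fin.sum_univ_three]
    simp only [hV, Matrix.cons_val_zero, Matrix.cons_val_one, Matrix.head_cons,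
      Matrix.cons_val_two, Matrix.tail_cons, Pi.add_apply, Pi.smul_apply, smul_eq_mul,
      hW, half]
    rw [gassEdge_apply e t u δ hB j (g i)]
    try ring
  have hdet : ∀ δ : (Fin B → ℝ) × (Fin B → ℝ),
      (Matrix.of fun i j => gassEdge e t u δ j (g i)).det
        = ∑ r : Fin (B - 1) → Fin 3, f (fun i => V δ i (r i)) := by
    intro δ
    have h1 : (Matrix.of fun i j => gassEdge e t u δ j (g i)).det
        = f (fun i => ∑ c : Fin 3, V δ i c) := by
      rw [← hrow δ]
      rfl
    rw [h1, ← AlternatingMap.coe_multilinearMap, MultilinearMap.map_sum]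
  -- continuity of each term
  have hc0 : ∀ (i j : Fin (B - 1)),
      Continuous fun δ : (Fin B → ℝ) × (Fin B → ℝ) => V δ i 0 j := by
    intro i j
    simp only [hV, Matrix.cons_val_zero]
    exact continuous_const
  have hc1 : ∀ (i j : Fin (B - 1)),
      Continuous fun δ : (Fin B → ℝ) × (Fin B → ℝ) => V δ i 1 j := by
    intro i j
    simp only [hV, Matrix.cons_val_one, Matrix.head_cons, Pi.smul_apply, smul_eq_mul, half]
    fun_prop
  have hc2 : ∀ (i j : Fin (B - 1)),
      Continuous fun δ : (Fin B → ℝ) × (Fin B → ℝ) => V δ i 2 j := by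
    intro i j
    simp only [hV, Matrix.cons_val_two, Matrix.tail_cons, Matrix.head_cons, Pi.smul_apply,
      smul_eq_mul, half]
    fun_prop
  have hVcont : ∀ (c : Fin 3) (i : Fin (B - 1)) (j : Fin (B - 1)),
      Continuous fun δ : (Fin B → ℝ) × (Fin B → ℝ) => V δ i c j := by
    intro c i j
    rcases c with ⟨cv, hcv⟩
    interval_cases cv
    · exact hc0 i j
    · exact hc1 i j
    · exact hc2 i j
  have hFcont : ∀ r : Fin (B - 1) → Fin 3,
      Continuous fun δ : (Fin B → ℝ) × (Fin B → ℝ) => f (fun i => V δ i (r i)) := by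
    intro r
    show Continuous fun δ : (Fin B → ℝ) × (Fin B → ℝ) =>
      (Matrix.of fun i j => V δ i (r i) j).det
    exact Continuous.matrix_det (continuous_matrix fun i j => hVcont (r i) i j)
  have hFint : ∀ r : Fin (B - 1) → Fin 3,
      Integrable (fun δ => f (fun i => V δ i (r i))) (gassMeasure B r₁ r₂) :=
    fun r => gass_integrable hr₁ hr₂ (hFcont r)
  -- the per-term value of the integral
  have hval : ∀ r : Fin (B - 1) → Fin 3,
      (∫ δ, f (fun i => V δ i (r i)) ∂(gassMeasure B r₁ r₂))
        = if r = (fun _ => 0) then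
            (Matrix.of fun i j =>
              gassEdge e t u (0 : (Fin B → ℝ) × (Fin B → ℝ)) j (g i)).det
          else 0 := by
    intro r
    have fin3_eq_zero : ∀ c : Fin 3, c ≠ 1 → c ≠ 2 → c = 0 := by decide
    by_cases h0 : r = fun _ => 0
    · rw [if_pos h0]
      subst h0
      have hconst : ∀ δ : (Fin B → ℝ) × (Fin B → ℝ),
          f (fun i => V δ i ((fun _ => (0 : Fin 3)) i))
            = (Matrix.of fun i j =>
                gassEdge e t u (0 : (Fin B → ℝ) × (Fin B → ℝ)) j (g i)).det := by
        intro δ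
        have h1 : (fun i => V δ i 0)
            = fun i (j : Fin (B - 1)) =>
                gassEdge e t u (0 : (Fin B → ℝ) × (Fin B → ℝ)) j (g i) := by
          funext i j
          simp only [hV, Matrix.cons_val_zero, hW]
          rw [gassEdge_apply e t u 0 hB j (g i)]
          simp [hz]
        show f (fun i => V δ i 0)
          = f (fun i (j : Fin (B - 1)) =>
              gassEdge e t u (0 : (Fin B → ℝ) × (Fin B → ℝ)) j (g i))
        rw [h1]
      rw [integral_congr_ae (Filter.Eventually.of_forall hconst), integral_const]
      simp
    · rw [if_neg h0]
      by_cases h1 : ∃ i₀ i₁ : Fin (B - 1), i₀ ≠ i₁ ∧ r i₀ = 1 ∧ r i₁ = 1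
      · obtain ⟨i₀, i₁, hne, e0, e1⟩ := h1
        have hzero : ∀ δ : (Fin B → ℝ) × (Fin B → ℝ), f (fun i => V δ i (r i)) = 0 := by
          intro δ
          refine alt_two_smul f _ hne (alf δ.1) (t (g i₀)) (t (g i₁)) ?_ ?_
          · simp only [e0, hV, Matrix.cons_val_one, Matrix.head_cons, Matrix.cons_val_zero]
          · simp only [e1, hV, Matrix.cons_val_one, Matrix.head_cons, Matrix.cons_val_zero]
        rw [integral_congr_ae (Filter.Eventually.of_forall hzero)]
        simp
      · by_cases h2 : ∃ i₀ i₁ : Fin (B - 1), i₀ ≠ i₁ ∧ r i₀ = 2 ∧ r i₁ = 2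
        · obtain ⟨i₀, i₁, hne, e0, e1⟩ := h2
          have hzero : ∀ δ : (Fin B → ℝ) × (Fin B → ℝ), f (fun i => V δ i (r i)) = 0 := by
            intro δ
            refine alt_two_smul f _ hne (alf δ.2) (u (g i₀)) (u (g i₁)) ?_ ?_
            · simp only [e0, hV, Matrix.cons_val_two, Matrix.tail_cons, Matrix.head_cons]
            · simp only [e1, hV, Matrix.cons_val_two, Matrix.tail_cons, Matrix.head_cons]
          rw [integral_congr_ae (Filter.Eventually.of_forall hzero)]
          simp
        · by_cases ha : ∃ i₀, r i₀ = 1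
          · obtain ⟨i₀, e0⟩ := ha
            by_cases hb : ∃ i₁, r i₁ = 2
            · -- one `1` at i₀ and one `2` at i₁
              obtain ⟨i₁, e1⟩ := hb
              have hne : i₀ ≠ i₁ := by
                intro hh
                rw [hh, e1] at e0
                exact absurd e0 (by decide)
              have hrest : ∀ i, i ≠ i₀ → i ≠ i₁ → r i = 0 := by
                intro i hi0 hi1
                refine fin3_eq_zero _ (fun hh => h1 ⟨i₀, i, Ne.symm hi0, e0, hh⟩)
                  (fun hh => h2 ⟨i₁, i, Ne.symm hi1, e1, hh⟩)
              have hupd : ∀ δ : (Fin B → ℝ) × (Fin B → ℝ),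
                  (fun i => V δ i (r i))
                    = Function.update (Function.update W i₀ (t (g i₀) • alf δ.1)) i₁
                        (u (g i₁) • alf δ.2) := by
                intro δ
                funext i
                by_cases hi1 : i = i₁
                · subst hi1
                  rw [Function.update_self]
                  simp only [hV, e1, Matrix.cons_val_two, Matrix.tail_cons, Matrix.head_cons]
                · rw [Function.update_of_ne hi1]
                  by_cases hi0 : i = i₀
                  · subst hi0
                    rw [Function.update_self]
                    simp only [hV, e0, Matrix.cons_val_one, Matrix.head_cons, Matrix.cons_val_zero]
                  · rw [Function.update_of_ne hi0]
                    simp only [hV, hrest i hi0 hi1, Matrix.cons_val_zero]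
              have hexp : ∀ δ : (Fin B → ℝ) × (Fin B → ℝ),
                  f (fun i => V δ i (r i))
                    = ∑ l, ∑ j, (δ.1 (embG j) - δ.1 z) *
                        ((δ.2 (embG l) - δ.2 z) *
                          (t (g i₀) * (u (g i₁) *
                            f (Function.update (Function.update W i₁ (bvec l)) i₀
                                (bvec j))))) := by
                intro δ
                have hb2 : alf δ.2 = ∑ l, (alf δ.2 l) • bvec l := by
                  nth_rewrite 1 [pi_eq_sum_univ (alf δ.2)]
                  rfl
                have hb1 : alf δ.1 = ∑ j, (alf δ.1 j) • bvec j := by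
                  nth_rewrite 1 [pi_eq_sum_univ (alf δ.1)]
                  rfl
                rw [hupd δ, AlternatingMap.map_update_smul, hb2,
                  AlternatingMap.map_update_sum, Finset.smul_sum]
                refine Finset.sum_congr rfl fun l _ => ?_
                rw [AlternatingMap.map_update_smul, Function.update_comm hne,
                  AlternatingMap.map_update_smul, hb1, AlternatingMap.map_update_sum,
                  Finset.smul_sum, Finset.smul_sum, Finset.smul_sum]
                refine Finset.sum_congr rfl fun j _ => ?_
                rw [AlternatingMap.map_update_smul]
                simp only [smul_eq_mul, half]
                ring
              rw [integral_congr_ae (Filter.Eventually.of_forall hexp)]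
              rw [integral_finset_sum _ (fun l _ => gass_integrable hr₁ hr₂
                (continuous_finset_sum _ fun j _ => by fun_prop))]
              refine Finset.sum_eq_zero fun l _ => ?_
              rw [integral_finset_sum _ (fun j _ => gass_integrable hr₁ hr₂ (by fun_prop))]
              refine Finset.sum_eq_zero fun j _ => ?_
              refine gass_integral_mul hr₁ hr₂ (fun a => a (embG j) - a z)
                (fun b => (b (embG l) - b z) *
                  (t (g i₀) * (u (g i₁) *
                    f (Function.update (Function.update W i₁ (bvec l)) i₀ (bvec j))))) ?_
              rw [integral_sub (pi_unif_integrable hr₁ (by fun_prop))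
                (pi_unif_integrable hr₁ (by fun_prop)),
                pi_unif_integral_eval hr₁, pi_unif_integral_eval hr₁, sub_zero]
            · -- exactly one `1` at i₀, no `2`
              have hrest : ∀ i, i ≠ i₀ → r i = 0 := by
                intro i hi0
                refine fin3_eq_zero _ (fun hh => h1 ⟨i₀, i, Ne.symm hi0, e0, hh⟩)
                  (fun hh => hb ⟨i, hh⟩)
              have hupd : ∀ δ : (Fin B → ℝ) × (Fin B → ℝ),
                  (fun i => V δ i (r i))
                    = Function.update W i₀ (t (g i₀) • alf δ.1) := by
                intro δ
                funext i
                by_cases hi0 : i = i₀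
                · subst hi0
                  rw [Function.update_self]
                  simp only [hV, e0, Matrix.cons_val_one, Matrix.head_cons, Matrix.cons_val_zero]
                · rw [Function.update_of_ne hi0]
                  simp only [hV, hrest i hi0, Matrix.cons_val_zero]
              have hexp : ∀ δ : (Fin B → ℝ) × (Fin B → ℝ),
                  f (fun i => V δ i (r i))
                    = ∑ j, (δ.1 (embG j) - δ.1 z) *
                        (t (g i₀) * f (Function.update W i₀ (bvec j))) := by
                intro δ
                have hb1 : alf δ.1 = ∑ j, (alf δ.1 j) • bvec j := by
                  nth_rewrite 1 [pi_eq_sum_univ (alf δ.1)]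
                  rfl
                rw [hupd δ, AlternatingMap.map_update_smul, hb1,
                  AlternatingMap.map_update_sum, Finset.smul_sum]
                refine Finset.sum_congr rfl fun j _ => ?_
                rw [AlternatingMap.map_update_smul]
                simp only [smul_eq_mul, half]
                ring
              rw [integral_congr_ae (Filter.Eventually.of_forall hexp)]
              rw [integral_finset_sum _ (fun j _ => gass_integrable hr₁ hr₂ (by fun_prop))]
              refine Finset.sum_eq_zero fun j _ => ?_
              rw [MeasureTheory.integral_mul_const]
              have hz0 : ∫ δ, (δ.1 (embG j) - δ.1 z) ∂(gassMeasure B r₁ r₂) = 0 := by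
                rw [integral_sub (gass_integrable hr₁ hr₂ (by fun_prop))
                  (gass_integrable hr₁ hr₂ (by fun_prop)),
                  gass_integral_fst hr₁ hr₂, gass_integral_fst hr₁ hr₂, sub_zero]
              rw [hz0, zero_mul]
          · by_cases hb : ∃ i₁, r i₁ = 2
            · -- exactly one `2` at i₁, no `1`
              obtain ⟨i₁, e1⟩ := hb
              have hrest : ∀ i, i ≠ i₁ → r i = 0 := by
                intro i hi1
                refine fin3_eq_zero _ (fun hh => ha ⟨i, hh⟩)
                  (fun hh => h2 ⟨i₁, i, Ne.symm hi1, e1, hh⟩)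
              have hupd : ∀ δ : (Fin B → ℝ) × (Fin B → ℝ),
                  (fun i => V δ i (r i))
                    = Function.update W i₁ (u (g i₁) • alf δ.2) := by
                intro δ
                funext i
                by_cases hi1 : i = i₁
                · subst hi1
                  rw [Function.update_self]
                  simp only [hV, e1, Matrix.cons_val_two, Matrix.tail_cons, Matrix.head_cons]
                · rw [Function.update_of_ne hi1]
                  simp only [hV, hrest i hi1, Matrix.cons_val_zero]
              have hexp : ∀ δ : (Fin B → ℝ) × (Fin B → ℝ),
                  f (fun i => V δ i (r i))
                    = ∑ l, (δ.2 (embG l) - δ.2 z) *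
                        (u (g i₁) * f (Function.update W i₁ (bvec l))) := by
                intro δ
                have hb2 : alf δ.2 = ∑ l, (alf δ.2 l) • bvec l := by
                  nth_rewrite 1 [pi_eq_sum_univ (alf δ.2)]
                  rfl
                rw [hupd δ, AlternatingMap.map_update_smul, hb2,
                  AlternatingMap.map_update_sum, Finset.smul_sum]
                refine Finset.sum_congr rfl fun l _ => ?_
                rw [AlternatingMap.map_update_smul]
                simp only [smul_eq_mul, half]
                ring
              rw [integral_congr_ae (Filter.Eventually.of_forall hexp)]
              rw [integral_finset_sum _ (fun l _ => gass_integrable hr₁ hr₂ (by fun_prop))]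
              refine Finset.sum_eq_zero fun l _ => ?_
              rw [MeasureTheory.integral_mul_const]
              have hz0 : ∫ δ, (δ.2 (embG l) - δ.2 z) ∂(gassMeasure B r₁ r₂) = 0 := by
                rw [integral_sub (gass_integrable hr₁ hr₂ (by fun_prop))
                  (gass_integrable hr₁ hr₂ (by fun_prop)),
                  gass_integral_snd hr₁ hr₂, gass_integral_snd hr₁ hr₂, sub_zero]
              rw [hz0, zero_mul]
            · exfalso
              apply h0
              funext i
              exact fin3_eq_zero _ (fun hh => ha ⟨i, hh⟩) (fun hh => hb ⟨i, hh⟩)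

  calc ∫ δ, (Matrix.of fun i j => gassEdge e t u δ j (g i)).det ∂(gassMeasure B r₁ r₂)
      = ∫ δ, ∑ r : Fin (B - 1) → Fin 3, f (fun i => V δ i (r i)) ∂(gassMeasure B r₁ r₂) := by
        refine integral_congr_ae (Filter.Eventually.of_forall fun δ => hdet δ)
    _ = ∑ r : Fin (B - 1) → Fin 3, ∫ δ, f (fun i => V δ i (r i)) ∂(gassMeasure B r₁ r₂) :=
        integral_finset_sum _ fun r _ => hFint r
    _ = ∑ r : Fin (B - 1) → Fin 3, if r = (fun _ => 0) then
          (Matrix.of fun i j =>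
            gassEdge e t u (0 : (Fin B → ℝ) × (Fin B → ℝ)) j (g i)).det else 0 :=
        Finset.sum_congr rfl fun r _ => hval r
    _ = _ := by rw [Finset.sum_ite_eq' Finset.univ]; simp

end Core

/-- **Expected geometric hypervolume guarantee** (Proposition 4.1, weak form). For `B ≥ 2`
points `e₁, …, e_B` on the unit sphere of `ℝᵈ`, perturbed along two orthonormal directions
`t, u` by independent uniform shifts on `[-r₁, r₁]` and `[-r₂, r₂]`, the expected
hypervolume of the perturbed point set is at least the hypervolume of the original set:
`E[V(δ)] ≥ V(0)`. -/
theorem gass_expected_volume_ge {d B : ℕ} (hB : 2 ≤ B)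
    (e : Fin B → EuclideanSpace ℝ (Fin d)) (he : ∀ i, ‖e i‖ = 1)
    (t u : EuclideanSpace ℝ (Fin d))
    (ht : ‖t‖ = 1) (hu : ‖u‖ = 1) (htu : inner ℝ t u = (0 : ℝ))
    {r₁ r₂ : ℝ} (hr₁ : 0 ≤ r₁) (hr₂ : 0 ≤ r₂) :
    ∫ δ, gassVolume e t u δ ∂(gassMeasure B r₁ r₂) ≥ gassVolume e t u 0 := by
  have hB0 : 0 < B := by omega
  have hprob := gass_prob (B := B) hr₁ hr₂
  set μ := gassMeasure B r₁ r₂ with hμ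
  set c : ℝ := Real.sqrt (Nat.factorial (B - 1)) * (Nat.factorial (B - 1)) with hc
  have hcpos : 0 < c := by
    have : (0:ℝ) < (Nat.factorial (B - 1) : ℝ) := by
      exact_mod_cast Nat.factorial_pos (B - 1)
    positivity
  -- the plain (pi-type valued) minor-determinant vector
  set T' : ((Fin B → ℝ) × (Fin B → ℝ)) → ((Fin (B - 1) → Fin d) → ℝ) :=
    fun δ g => (Matrix.of fun i j => gassEdge e t u δ j (g i)).det with hT'
  have hcont_entry : ∀ (j : Fin (B - 1)) (x : Fin d),
      Continuous fun δ : (Fin B → ℝ) × (Fin B → ℝ) => gassEdge e t u δ j x := by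
    intro j x
    have hfun : (fun δ : (Fin B → ℝ) × (Fin B → ℝ) => gassEdge e t u δ j x)
        = fun δ => (e (embG j) x - e (⟨0, hB0⟩ : Fin B) x)
            + (δ.1 (embG j) - δ.1 ⟨0, hB0⟩) * t x
            + (δ.2 (embG j) - δ.2 ⟨0, hB0⟩) * u x :=
      funext fun δ => gassEdge_apply e t u δ hB0 j x
    rw [hfun]
    fun_prop
  have hT'cont : Continuous T' :=
    continuous_pi fun g => Continuous.matrix_det
      (continuous_matrix fun i j => hcont_entry j (g i))
  have hT'int : Integrable T' μ := gass_integrable hr₁ hr₂ hT'cont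
  have hT'val : ∫ δ, T' δ ∂μ = T' 0 := by
    funext g
    have hproj := ContinuousLinearMap.integral_comp_comm
      (ContinuousLinearMap.proj (R := ℝ) (φ := fun _ : (Fin (B - 1) → Fin d) => ℝ) g) hT'int
    have h1 : (∫ δ, T' δ ∂μ) g = ∫ δ, T' δ g ∂μ := by
      simpa using hproj.symm
    rw [h1]
    exact integral_Tg e t u hB0 hr₁ hr₂ g
  -- the Euclidean-space valued version
  set L : ((Fin (B - 1) → Fin d) → ℝ) →L[ℝ] EuclideanSpace ℝ (Fin (B - 1) → Fin d) :=
    ((EuclideanSpace.equiv (Fin (B - 1) → Fin d) ℝ).symm :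
      ((Fin (B - 1) → Fin d) → ℝ) ≃L[ℝ] EuclideanSpace ℝ (Fin (B - 1) → Fin d)).toContinuousLinearMap
    with hL
  have hTL : ∀ δ, Tvec e t u δ = L (T' δ) := fun δ => rfl
  have hTint : Integrable (fun δ => Tvec e t u δ) μ := by
    have := L.integrable_comp hT'int
    simpa [← hTL] using this
  have hTval : ∫ δ, Tvec e t u δ ∂μ = Tvec e t u 0 := by
    have h2 := ContinuousLinearMap.integral_comp_comm L hT'int
    calc ∫ δ, Tvec e t u δ ∂μ = ∫ δ, L (T' δ) ∂μ := by
          exact integral_congr_ae (Filter.Eventually.of_forall fun δ => hTL δ)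
      _ = L (∫ δ, T' δ ∂μ) := h2
      _ = L (T' 0) := by rw [hT'val]
      _ = Tvec e t u 0 := (hTL 0).symm
  rw [ge_iff_le]
  calc gassVolume e t u 0 = ‖Tvec e t u 0‖ / c := volume_eq_norm e t u 0
    _ = ‖∫ δ, Tvec e t u δ ∂μ‖ / c := by rw [hTval]
    _ ≤ (∫ δ, ‖Tvec e t u δ‖ ∂μ) / c := by
        exact (div_le_div_iff_of_pos_right hcpos).2 (norm_integral_le_integral_norm _)
    _ = ∫ δ, ‖Tvec e t u δ‖ / c ∂μ := (integral_div c _).symm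
    _ = ∫ δ, gassVolume e t u δ ∂μ :=
        integral_congr_ae (Filter.Eventually.of_forall fun δ => (volume_eq_norm e t u δ).symm)
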